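/- Let m ≥ 1 and C(h) = (h, h²/2, …, h^m/m!) ∈ ℝ^m for h ∈ [−1,1], and for g : [−1,1] → ℝ^m and 0 ≤ ε ≤ 1 define δ(g, ε) := min_{‖η‖ = 1} ∫_{−ε}^{ε} ⟨η, g(h)⟩² dh. Then δ(C, 1) > 0, and for every C_Pert > 0 and every continuous Pert : [−1,1] → ℝ^m with ‖Pert(h)‖ ≤ C_Pert |h|^{m+1} on [−1,1], the curve V := C + Pert satisfies δ(V, ε) ≥ (1/2) δ(C, 1) ε^{2m+1} for all sufficiently small ε > 0. -/

import Mathlib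

open Set Filter Topology

/-- The moment-type curve `h ↦ (h, h²/2, …, hᵐ/m!)` in `ℝᵐ`. -/
noncomputable def momentCurve (m : ℕ) (h : ℝ) : EuclideanSpace ℝ (Fin m) :=
  (WithLp.equiv 2 (Fin m → ℝ)).symm
    (fun n => h ^ ((n : ℕ) + 1) / (Nat.factorial ((n : ℕ) + 1) : ℝ))

/-- `δ(g, ε) = min_{‖η‖=1} ∫_{-ε}^{ε} ⟨η, g(h)⟩² dh`. -/
noncomputable def deltaFun {m : ℕ} (g : ℝ → EuclideanSpace ℝ (Fin m)) (ε : ℝ) : ℝ :=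
  sInf {r : ℝ | ∃ η : EuclideanSpace ℝ (Fin m), ‖η‖ = 1 ∧
    r = ∫ h in (-ε)..ε, (inner ℝ η (g h) : ℝ) ^ 2}

namespace Stmt15Aux

open intervalIntegral MeasureTheory

lemma inner_momentCurve (m : ℕ) (η : EuclideanSpace ℝ (Fin m)) (h : ℝ) :
    (inner ℝ η (momentCurve m h) : ℝ)
      = ∑ n : Fin m, η n * (h ^ ((n:ℕ)+1) / (Nat.factorial ((n:ℕ)+1) : ℝ)) := by
  simp [momentCurve, PiLp.inner_apply, RCLike.inner_apply, mul_comm]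

lemma continuous_momentCurve (m : ℕ) : Continuous (momentCurve m) := by
  refine (PiLp.continuous_toLp 2 (fun _ : Fin m => ℝ)).comp ?_
  fun_prop

lemma pos_integral (m : ℕ) (η : EuclideanSpace ℝ (Fin m)) (hη : η ≠ 0) :
    0 < ∫ h in (-1:ℝ)..1, (inner ℝ η (momentCurve m h) : ℝ) ^ 2 := by
  classical
  set p : Polynomial ℝ := ∑ n : Fin m, Polynomial.C (η n / (Nat.factorial ((n:ℕ)+1) : ℝ))
      * Polynomial.X ^ ((n:ℕ)+1) with hp_def
  have hev : ∀ h : ℝ, p.eval h = (inner ℝ η (momentCurve m h) : ℝ) := by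
    intro h
    rw [inner_momentCurve, hp_def, Polynomial.eval_finset_sum]
    refine Finset.sum_congr rfl fun n _ => ?_
    simp [div_mul_eq_mul_div, mul_div_assoc]
  have hp0 : p ≠ 0 := by
    obtain ⟨n, hn⟩ : ∃ n, η n ≠ 0 := by
      by_contra hc
      push_neg at hc
      exact hη (by ext i; simpa using hc i)
    intro h0
    have hc : p.coeff ((n:ℕ)+1) = η n / (Nat.factorial ((n:ℕ)+1) : ℝ) := by
      rw [hp_def, Polynomial.finset_sum_coeff]
      rw [Finset.sum_eq_single n]
      · simp
      · intro j _ hj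
        have : ((n:ℕ)+1) ≠ ((j:ℕ)+1) := by
          simp only [ne_eq, add_left_inj]
          exact fun hnj => hj (Fin.ext hnj.symm)
        simp [Polynomial.coeff_C_mul, Polynomial.coeff_X_pow, this]
        intro hnj; exact absurd (Fin.ext hnj).symm hj
      · simp
    rw [h0] at hc
    simp only [Polynomial.coeff_zero] at hc
    have : η n = 0 := by
      field_simp at hc
      simpa using hc.symm
    exact hn this
  have hfin : {x : ℝ | p.IsRoot x}.Finite := p.finite_setOf_isRoot hp0
  have hle : (-1:ℝ) ≤ 1 := by norm_num
  rw [intervalIntegral.integral_of_le hle]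
  set g : ℝ → ℝ := fun h => (inner ℝ η (momentCurve m h) : ℝ) ^ 2 with hg_def
  have hgc : Continuous g :=
    (continuous_const.inner (continuous_momentCurve m)).pow 2
  rw [setIntegral_pos_iff_support_of_nonneg_ae
    (ae_of_all _ fun x => sq_nonneg _) (hgc.integrableOn_Ioc)]
  have hsub : Ioc (-1:ℝ) 1 \ {x | p.IsRoot x} ⊆ Function.support g ∩ Ioc (-1) 1 := by
    rintro x ⟨hx1, hx2⟩
    refine ⟨?_, hx1⟩
    simp only [Function.mem_support, hg_def]
    intro h0
    exact hx2 (by simpa [Polynomial.IsRoot, hev x] using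
      pow_eq_zero_iff (n := 2) (by norm_num) |>.mp h0)
  refine lt_of_lt_of_le ?_ (measure_mono hsub)
  rw [measure_diff_null (hfin.measure_zero _)]
  simp [Real.volume_Ioc]

lemma bddBelow_set (m : ℕ) (g : ℝ → EuclideanSpace ℝ (Fin m)) (ε : ℝ) (hε : 0 ≤ ε) :
    BddBelow {r : ℝ | ∃ η : EuclideanSpace ℝ (Fin m), ‖η‖ = 1 ∧
      r = ∫ h in (-ε)..ε, (inner ℝ η (g h) : ℝ) ^ 2} := by
  refine ⟨0, ?_⟩
  rintro r ⟨η, -, rfl⟩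
  exact intervalIntegral.integral_nonneg (by linarith) fun x _ => sq_nonneg _

lemma nonempty_set (m : ℕ) (hm : 1 ≤ m) (g : ℝ → EuclideanSpace ℝ (Fin m)) (ε : ℝ) :
    ({r : ℝ | ∃ η : EuclideanSpace ℝ (Fin m), ‖η‖ = 1 ∧
      r = ∫ h in (-ε)..ε, (inner ℝ η (g h) : ℝ) ^ 2}).Nonempty := by
  refine ⟨_, EuclideanSpace.single ⟨0, hm⟩ (1:ℝ), ?_, rfl⟩
  simp [EuclideanSpace.norm_single]

lemma deltaFun_le (m : ℕ) (g : ℝ → EuclideanSpace ℝ (Fin m)) (ε : ℝ) (hε : 0 ≤ ε)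
    (η : EuclideanSpace ℝ (Fin m)) (hη : ‖η‖ = 1) :
    deltaFun g ε ≤ ∫ h in (-ε)..ε, (inner ℝ η (g h) : ℝ) ^ 2 :=
  csInf_le (bddBelow_set m g ε hε) ⟨η, hη, rfl⟩

lemma deltaC_pos (m : ℕ) (hm : 1 ≤ m) : 0 < deltaFun (momentCurve m) 1 := by
  set F : EuclideanSpace ℝ (Fin m) → ℝ :=
    fun η => ∫ h in (-1:ℝ)..1, (inner ℝ η (momentCurve m h) : ℝ) ^ 2 with hF_def
  have hFc : Continuous F := by
    refine intervalIntegral.continuous_parametric_intervalIntegral_of_continuous' ?_ _ _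
    exact (continuous_fst.inner ((continuous_momentCurve m).comp continuous_snd)).pow 2
  have hset : {r : ℝ | ∃ η : EuclideanSpace ℝ (Fin m), ‖η‖ = 1 ∧
      r = ∫ h in (-(1:ℝ))..1, (inner ℝ η (momentCurve m h) : ℝ) ^ 2}
      = F '' (Metric.sphere (0 : EuclideanSpace ℝ (Fin m)) 1) := by
    ext r
    simp only [mem_setOf_eq, Set.mem_image, mem_sphere_iff_norm, sub_zero, hF_def]
    constructor
    · rintro ⟨η, h1, h2⟩; exact ⟨η, h1, h2.symm⟩
    · rintro ⟨η, h1, h2⟩; exact ⟨η, h1, h2.symm⟩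
  have hK : IsCompact (F '' (Metric.sphere (0 : EuclideanSpace ℝ (Fin m)) 1)) :=
    (isCompact_sphere _ _).image hFc
  have hne : (F '' (Metric.sphere (0 : EuclideanSpace ℝ (Fin m)) 1)).Nonempty := by
    refine ⟨_, EuclideanSpace.single ⟨0, hm⟩ (1:ℝ), ?_, rfl⟩
    simp [EuclideanSpace.norm_single]
  obtain ⟨η₀, hη₀, hval⟩ := hK.sInf_mem hne
  rw [deltaFun, hset, ← hval]
  refine pos_integral m η₀ ?_
  intro h0
  rw [h0] at hη₀
  simp at hη₀

noncomputable def Dscale (m : ℕ) (ε : ℝ) (η : EuclideanSpace ℝ (Fin m)) :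
    EuclideanSpace ℝ (Fin m) :=
  (WithLp.equiv 2 (Fin m → ℝ)).symm (fun n => ε ^ ((n:ℕ)+1) * η n)

lemma inner_scale (m : ℕ) (ε : ℝ) (η : EuclideanSpace ℝ (Fin m)) (t : ℝ) :
    (inner ℝ η (momentCurve m (ε * t)) : ℝ)
      = (inner ℝ (Dscale m ε η) (momentCurve m t) : ℝ) := by
  rw [inner_momentCurve, inner_momentCurve]
  refine Finset.sum_congr rfl fun n _ => ?_
  have : (Dscale m ε η) n = ε ^ ((n:ℕ)+1) * η n := rfl
  rw [this, mul_pow]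
  ring

lemma norm_Dscale_ge (m : ℕ) (ε : ℝ) (η : EuclideanSpace ℝ (Fin m))
    (hε0 : 0 ≤ ε) (hε1 : ε ≤ 1) (hη : ‖η‖ = 1) :
    ε ^ m ≤ ‖Dscale m ε η‖ := by
  have hnn : (0:ℝ) ≤ ‖Dscale m ε η‖ := norm_nonneg _
  have hsq : (ε ^ m) ^ 2 ≤ ‖Dscale m ε η‖ ^ 2 := by
    rw [EuclideanSpace.norm_eq]
    rw [Real.sq_sqrt (by positivity)]
    have hη2 : ∑ n : Fin m, (η n) ^ 2 = 1 := by
      have h1 := EuclideanSpace.norm_eq η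
      rw [hη] at h1
      have h2 : Real.sqrt (∑ n : Fin m, ‖η n‖ ^ 2) = 1 := h1.symm
      have h3 := congrArg (· ^ 2) h2
      simp only [Real.sq_sqrt (by positivity : (0:ℝ) ≤ ∑ n : Fin m, ‖η n‖ ^ 2)] at h3
      simpa [Real.norm_eq_abs, sq_abs] using h3
    calc (ε ^ m) ^ 2 = ∑ n : Fin m, (ε ^ m) ^ 2 * (η n) ^ 2 := by
          rw [← Finset.mul_sum, hη2, mul_one]
      _ ≤ ∑ n : Fin m, ‖(Dscale m ε η) n‖ ^ 2 := by
          refine Finset.sum_le_sum fun n _ => ?_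
          have hd : (Dscale m ε η) n = ε ^ ((n:ℕ)+1) * η n := rfl
          rw [hd, Real.norm_eq_abs, sq_abs, mul_pow]
          have hle : ε ^ m ≤ ε ^ ((n:ℕ)+1) :=
            pow_le_pow_of_le_one hε0 hε1 (Nat.succ_le_of_lt n.isLt)
          have h4 : (ε ^ m) ^ 2 ≤ (ε ^ ((n:ℕ)+1)) ^ 2 :=
            pow_le_pow_left₀ (by positivity) hle 2
          exact mul_le_mul_of_nonneg_right h4 (sq_nonneg _)
  exact (pow_le_pow_iff_left₀ (by positivity) hnn two_ne_zero).mp hsq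

lemma L4 (m : ℕ) (ξ : EuclideanSpace ℝ (Fin m)) (hξ : ξ ≠ 0) :
    ‖ξ‖ ^ 2 * deltaFun (momentCurve m) 1
      ≤ ∫ t in (-1:ℝ)..1, (inner ℝ ξ (momentCurve m t) : ℝ) ^ 2 := by
  set u : EuclideanSpace ℝ (Fin m) := ‖ξ‖⁻¹ • ξ with hu_def
  have hnorm : ‖u‖ = 1 := norm_smul_inv_norm hξ
  have hδle := deltaFun_le m (momentCurve m) 1 (by norm_num) u hnorm
  have hξu : ξ = ‖ξ‖ • u := by
    rw [hu_def, smul_smul, mul_inv_cancel₀ (norm_ne_zero_iff.mpr hξ), one_smul]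
  have key : ∀ t : ℝ, (inner ℝ ξ (momentCurve m t) : ℝ) ^ 2
      = ‖ξ‖ ^ 2 * (inner ℝ u (momentCurve m t) : ℝ) ^ 2 := by
    intro t
    have h1 : (inner ℝ ξ (momentCurve m t) : ℝ) = ‖ξ‖ * (inner ℝ u (momentCurve m t) : ℝ) := by
      conv_lhs => rw [hξu]
      rw [real_inner_smul_left]
    rw [h1]
    ring
  calc ‖ξ‖ ^ 2 * deltaFun (momentCurve m) 1
      ≤ ‖ξ‖ ^ 2 * ∫ t in (-1:ℝ)..1, (inner ℝ u (momentCurve m t) : ℝ) ^ 2 :=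
        mul_le_mul_of_nonneg_left hδle (sq_nonneg _)
    _ = ∫ t in (-1:ℝ)..1, (inner ℝ ξ (momentCurve m t) : ℝ) ^ 2 := by
        rw [← intervalIntegral.integral_const_mul]
        exact intervalIntegral.integral_congr fun t _ => (key t).symm

lemma L5 (m : ℕ) (ε : ℝ) (hε0 : 0 < ε) (hε1 : ε ≤ 1)
    (η : EuclideanSpace ℝ (Fin m)) (hη : ‖η‖ = 1)
    (hδ0 : 0 ≤ deltaFun (momentCurve m) 1) :
    ε ^ (2*m+1) * deltaFun (momentCurve m) 1
      ≤ ∫ h in (-ε)..ε, (inner ℝ η (momentCurve m h) : ℝ) ^ 2 := by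
  have hsubst : ∫ h in (-ε)..ε, (inner ℝ η (momentCurve m h) : ℝ) ^ 2
      = ε * ∫ t in (-1:ℝ)..1, (inner ℝ η (momentCurve m (ε * t)) : ℝ) ^ 2 := by
    have h0 := mul_integral_comp_mul_left (c := ε) (a := (-1:ℝ)) (b := (1:ℝ))
      (f := fun h => (inner ℝ η (momentCurve m h) : ℝ) ^ 2)
    have h2 : ε * (-1:ℝ) = -ε := by ring
    rw [h2, mul_one] at h0
    exact h0.symm
  have hn := norm_Dscale_ge m ε η hε0.le hε1 hη
  have hξ : Dscale m ε η ≠ 0 := by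
    intro h0
    rw [h0, norm_zero] at hn
    exact absurd (le_antisymm hn (by positivity)) (by positivity)
  calc ε ^ (2*m+1) * deltaFun (momentCurve m) 1
      = ε * ((ε ^ m) ^ 2 * deltaFun (momentCurve m) 1) := by ring
    _ ≤ ε * (‖Dscale m ε η‖ ^ 2 * deltaFun (momentCurve m) 1) := by
        refine mul_le_mul_of_nonneg_left ?_ hε0.le
        exact mul_le_mul_of_nonneg_right
          (pow_le_pow_left₀ (by positivity) hn 2) hδ0
    _ ≤ ε * ∫ t in (-1:ℝ)..1, (inner ℝ (Dscale m ε η) (momentCurve m t) : ℝ) ^ 2 :=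
        mul_le_mul_of_nonneg_left (L4 m _ hξ) hε0.le
    _ = ∫ h in (-ε)..ε, (inner ℝ η (momentCurve m h) : ℝ) ^ 2 := by
        rw [hsubst]
        congr 1
        exact intervalIntegral.integral_congr fun t _ => by rw [inner_scale]

end Stmt15Aux

open Stmt15Aux intervalIntegral MeasureTheory

/-- **Lemmas JJ19 and JJ20.** For the curve `C(h) = (h, h²/2, …, hᵐ/m!)` one has
`δ(C, 1) > 0`; and if `V = C + Pert` with `Pert` continuous and
`‖Pert h‖ ≤ C_Pert |h|^{m+1}` on `[-1, 1]`, then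
`δ(V, ε) ≥ ½ δ(C, 1) ε^{2m+1}` for all sufficiently small `ε > 0`. -/
theorem statement15 (m : ℕ) (hm : 1 ≤ m) :
    0 < deltaFun (momentCurve m) 1 ∧
    ∀ CPert > (0:ℝ), ∀ Pert : ℝ → EuclideanSpace ℝ (Fin m),
      ContinuousOn Pert (Icc (-1) 1) →
      (∀ h ∈ Icc (-1:ℝ) 1, ‖Pert h‖ ≤ CPert * |h| ^ (m + 1)) →
      ∃ ε' > (0:ℝ), ∀ ε : ℝ, 0 < ε → ε ≤ ε' →
        (1 / 2) * deltaFun (momentCurve m) 1 * ε ^ (2 * m + 1)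
          ≤ deltaFun (fun h => momentCurve m h + Pert h) ε := by
  have hδ : 0 < deltaFun (momentCurve m) 1 := deltaC_pos m hm
  refine ⟨hδ, ?_⟩
  intro CPert hC Pert hPc hPb
  set δ := deltaFun (momentCurve m) 1 with hδ_def
  refine ⟨min 1 (δ / (12 * CPert ^ 2)), lt_min one_pos (by positivity), ?_⟩
  intro ε hε0 hε'
  have hε1 : ε ≤ 1 := le_trans hε' (min_le_left _ _)
  have hεδ : ε ≤ δ / (12 * CPert ^ 2) := le_trans hε' (min_le_right _ _)
  refine le_csInf (nonempty_set m hm _ ε) ?_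
  rintro r ⟨η, hη, rfl⟩
  set a : ℝ → ℝ := fun h => (inner ℝ η (momentCurve m h) : ℝ) with ha_def
  set b : ℝ → ℝ := fun h => (inner ℝ η (Pert h) : ℝ) with hb_def
  have hinner : ∀ h : ℝ, (inner ℝ η (momentCurve m h + Pert h) : ℝ) = a h + b h := by
    intro h; rw [ha_def, hb_def]; exact inner_add_right _ _ _
  have hac : Continuous a := continuous_const.inner (continuous_momentCurve m)
  have hsub : uIcc (-ε) ε ⊆ Icc (-1:ℝ) 1 := by
    rw [uIcc_of_le (by linarith)]
    exact Icc_subset_Icc (by linarith) hε1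
  have hbc : ContinuousOn b (uIcc (-ε) ε) :=
    (continuousOn_const.inner (hPc.mono hsub))
  have i1 : IntervalIntegrable (fun h => (a h + b h) ^ 2) volume (-ε) ε :=
    (((hac.continuousOn.add hbc)).pow 2).intervalIntegrable
  have i2 : IntervalIntegrable (fun h => a h ^ 2) volume (-ε) ε :=
    ((hac.pow 2)).intervalIntegrable _ _
  have i3 : IntervalIntegrable (fun h => b h ^ 2) volume (-ε) ε :=
    ((hbc.pow 2)).intervalIntegrable
  have i4 : IntervalIntegrable (fun h => 3/4 * a h ^ 2 - 3 * b h ^ 2) volume (-ε) ε :=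
    (i2.const_mul _).sub (i3.const_mul _)
  -- pointwise lower bound
  have step1 : ∫ h in (-ε)..ε, (3/4 * a h ^ 2 - 3 * b h ^ 2)
      ≤ ∫ h in (-ε)..ε, (a h + b h) ^ 2 := by
    refine intervalIntegral.integral_mono_on (by linarith) i4 i1 fun x _ => ?_
    nlinarith [sq_nonneg (a x / 2 + 2 * b x)]
  have step2 : ∫ h in (-ε)..ε, (3/4 * a h ^ 2 - 3 * b h ^ 2)
      = 3/4 * (∫ h in (-ε)..ε, a h ^ 2) - 3 * ∫ h in (-ε)..ε, b h ^ 2 := by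
    rw [intervalIntegral.integral_sub (i2.const_mul _) (i3.const_mul _),
      intervalIntegral.integral_const_mul, intervalIntegral.integral_const_mul]
  have step3 : ε ^ (2*m+1) * δ ≤ ∫ h in (-ε)..ε, a h ^ 2 :=
    L5 m ε hε0 hε1 η hη hδ.le
  -- bound on ∫ b²
  have step4 : ∫ h in (-ε)..ε, b h ^ 2 ≤ CPert ^ 2 * ε ^ (2*m+3) := by
    have i5 : IntervalIntegrable (fun h : ℝ => CPert ^ 2 * h ^ (2*m+2)) volume (-ε) ε :=
      (continuous_const.mul (continuous_pow _)).intervalIntegrable _ _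
    have hmono : ∫ h in (-ε)..ε, b h ^ 2 ≤ ∫ h in (-ε)..ε, CPert ^ 2 * h ^ (2*m+2) := by
      refine intervalIntegral.integral_mono_on (by linarith) i3 i5 fun x hx => ?_
      have hx1 : x ∈ Icc (-1:ℝ) 1 := hsub (by rwa [uIcc_of_le (by linarith)])
      have habs : |b x| ≤ CPert * |x| ^ (m+1) := by
        calc |b x| ≤ ‖η‖ * ‖Pert x‖ := abs_real_inner_le_norm η (Pert x)
          _ = ‖Pert x‖ := by rw [hη, one_mul]
          _ ≤ CPert * |x| ^ (m+1) := hPb x hx1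
      have h1 : b x ^ 2 ≤ (CPert * |x| ^ (m+1)) ^ 2 := by
        rw [← sq_abs (b x)]
        exact pow_le_pow_left₀ (abs_nonneg _) habs 2
      have h2 : (CPert * |x| ^ (m+1)) ^ 2 = CPert ^ 2 * x ^ (2*m+2) := by
        have h3 : (|x| ^ (m+1)) ^ 2 = |x| ^ (2*m+2) := by
          rw [← pow_mul]
          congr 1
          ring
        have h4 : |x| ^ (2*m+2) = x ^ (2*m+2) := Even.pow_abs ⟨m+1, by ring⟩ x
        rw [mul_pow, h3, h4]
      rw [h2] at h1
      exact h1
    have hval : ∫ h in (-ε)..ε, CPert ^ 2 * h ^ (2*m+2)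
        = CPert ^ 2 * (2 * ε ^ (2*m+3) / (2*m+3)) := by
      rw [intervalIntegral.integral_const_mul, integral_pow]
      have hodd : (-ε) ^ (2*m+2+1) = -(ε ^ (2*m+2+1)) := Odd.neg_pow ⟨m+1, by ring⟩ ε
      rw [hodd]
      have : (2*m+2+1) = 2*m+3 := by ring
      rw [this]
      push_cast
      ring
    have hfin : CPert ^ 2 * (2 * ε ^ (2*m+3) / (2*m+3)) ≤ CPert ^ 2 * ε ^ (2*m+3) := by
      refine mul_le_mul_of_nonneg_left ?_ (by positivity)
      rw [div_le_iff₀ (by positivity)]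
      have hε23 : (0:ℝ) ≤ ε ^ (2*m+3) := by positivity
      nlinarith [hε23]
    calc ∫ h in (-ε)..ε, b h ^ 2 ≤ ∫ h in (-ε)..ε, CPert ^ 2 * h ^ (2*m+2) := hmono
      _ = CPert ^ 2 * (2 * ε ^ (2*m+3) / (2*m+3)) := hval
      _ ≤ CPert ^ 2 * ε ^ (2*m+3) := hfin
  -- final arithmetic
  have hε2 : ε ^ 2 ≤ ε := by nlinarith
  have hsmall : 3 * CPert ^ 2 * ε ^ 2 ≤ δ / 4 := by
    have h1 : CPert ^ 2 * ε ≤ δ / 12 := by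
      rw [le_div_iff₀ (by positivity : (0:ℝ) < 12 * CPert ^ 2)] at hεδ
      nlinarith
    nlinarith [sq_nonneg CPert, mul_le_mul_of_nonneg_left hε2 (sq_nonneg CPert)]
  have hkey : 1/2 * δ * ε ^ (2*m+1)
      ≤ 3/4 * (ε ^ (2*m+1) * δ) - 3 * (CPert ^ 2 * ε ^ (2*m+3)) := by
    have hpow : ε ^ (2*m+3) = ε ^ 2 * ε ^ (2*m+1) := by ring
    rw [hpow]
    have hεp : (0:ℝ) < ε ^ (2*m+1) := by positivity
    nlinarith [mul_le_mul_of_nonneg_right hsmall hεp.le]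
  calc (1/2) * δ * ε ^ (2*m+1)
      ≤ 3/4 * (ε ^ (2*m+1) * δ) - 3 * (CPert ^ 2 * ε ^ (2*m+3)) := hkey
    _ ≤ 3/4 * (∫ h in (-ε)..ε, a h ^ 2) - 3 * ∫ h in (-ε)..ε, b h ^ 2 := by
        have := mul_le_mul_of_nonneg_left step3 (by norm_num : (0:ℝ) ≤ 3/4)
        have := mul_le_mul_of_nonneg_left step4 (by norm_num : (0:ℝ) ≤ 3)
        linarith
    _ = ∫ h in (-ε)..ε, (3/4 * a h ^ 2 - 3 * b h ^ 2) := step2.symm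
    _ ≤ ∫ h in (-ε)..ε, (a h + b h) ^ 2 := step1
    _ = ∫ h in (-ε)..ε, (inner ℝ η (momentCurve m h + Pert h) : ℝ) ^ 2 :=
        intervalIntegral.integral_congr fun h _ => by rw [hinner h]
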